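/- arXiv:0804.4447 — 7 statements merged into one kernel-verified Lean document; each statement's English description precedes it below -/
import Mathlib

section
/- If the cyclic submodule Rξ ⊆ R² is maximally isotropic (i.e., isotropic, and any η with σ̂(ξ,η)=0 lies in Rξ), then the components ξ₊ and ξ₋ are coprime in R. -/
open LaurentPolynomial

/-- The `R`-valued symplectic form `σ̂(ξ,η) = ξ₊* η₋ − ξ₋* η₊` on `R²`,
where `f* = invert f` is the involution `u ↦ u⁻¹`. -/
noncomputable def sig {p : ℕ} (ξ η : LaurentPolynomial (ZMod p) × LaurentPolynomial (ZMod p)) :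
    LaurentPolynomial (ZMod p) :=
  invert ξ.1 * η.2 - invert ξ.2 * η.1

/-- If `Rξ` is maximally isotropic, then `ξ₊` and `ξ₋` are coprime:
every common divisor is a unit. -/
theorem max_isotropic_coprime (p : ℕ) [Fact p.Prime]
    (ξ : LaurentPolynomial (ZMod p) × LaurentPolynomial (ZMod p))
    (hiso : sig ξ ξ = 0)
    (hmax : ∀ η : LaurentPolynomial (ZMod p) × LaurentPolynomial (ZMod p),
      sig ξ η = 0 → ∃ f : LaurentPolynomial (ZMod p), η = (f * ξ.1, f * ξ.2)) :
    ∀ d : LaurentPolynomial (ZMod p), d ∣ ξ.1 → d ∣ ξ.2 → IsUnit d := by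
  intro d hd1 hd2
  obtain ⟨a, ha⟩ := hd1
  obtain ⟨b, hb⟩ := hd2
  -- case ξ = 0
  by_cases hξ : ξ.1 = 0 ∧ ξ.2 = 0
  · exfalso
    obtain ⟨f, hf⟩ := hmax (1, 0) (by simp [sig, hξ.1, hξ.2])
    have : (1 : LaurentPolynomial (ZMod p)) = f * ξ.1 := congrArg Prod.fst hf
    rw [hξ.1, mul_zero] at this
    exact one_ne_zero this
  · have hd0 : d ≠ 0 := by
      rintro rfl
      exact hξ ⟨by simp [ha], by simp [hb]⟩
    have hinvd : invert d ≠ 0 := fun h => hd0 (by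
      have := congrArg invert h
      rwa [LaurentPolynomial.involutive_invert d, map_zero] at this)
    -- from isotropy deduce invert a * b = invert b * a
    have hiso' : invert a * b = invert b * a := by
      have h : invert d * d * (invert a * b) = invert d * d * (invert b * a) := by
        have := sub_eq_zero.mp hiso
        simp only [sig, ha, hb, map_mul] at this ⊢
        ring_nf
        ring_nf at this
        linear_combination this
      have hdd : invert d * d ≠ 0 := mul_ne_zero hinvd hd0
      exact mul_left_cancel₀ hdd h
    obtain ⟨f, hf⟩ := hmax (a, b) (by
      simp only [sig, ha, hb, map_mul]
      ring_nf
      linear_combination invert d * hiso')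
    have hfa : a = f * (d * a) := by simpa [ha] using congrArg Prod.fst hf
    have hfb : b = f * (d * b) := by simpa [hb] using congrArg Prod.snd hf
    have hab : a ≠ 0 ∨ b ≠ 0 := by
      by_contra h
      push_neg at h
      exact hξ ⟨by simp [ha, h.1], by simp [hb, h.2]⟩
    have hfd : f * d = 1 := by
      rcases hab with h | h
      · have : a * 1 = a * (f * d) := by linear_combination hfa
        exact (mul_left_cancel₀ h this).symm
      · have : b * 1 = b * (f * d) := by linear_combination hfb
        exact (mul_left_cancel₀ h this).symm
    exact IsUnit.of_mul_eq_one (a := d) f (by linear_combination hfd)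
end

section
/- If the cyclic submodule Rξ ⊆ R² is maximally isotropic, then ξ is reflection invariant: there exists a ∈ ½ℤ with ξ = u^{2a}·ξ*, i.e., ξ* = u^n ξ for some integer n. -/
open LaurentPolynomial

section Helpers

variable {F : Type*} [Field F]

noncomputable def ev1 : LaurentPolynomial F →+* F :=
  AddMonoidAlgebra.liftNCRingHom (RingHom.id F) 1 (fun _ _ => Commute.one_right _)

@[simp] lemma ev1_C_mul_T (a : F) (n : ℤ) : ev1 (C a * T n) = a := by
  rw [← single_eq_C_mul_T]
  simpa [ev1, AddMonoidAlgebra.liftNCRingHom] using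
    AddMonoidAlgebra.liftNC_single (RingHom.id F).toAddMonoidHom ((1 : Multiplicative ℤ →* F) : Multiplicative ℤ → F) n a

@[simp] lemma ev1_T (n : ℤ) : ev1 (T n : LaurentPolynomial F) = 1 := by
  simpa using ev1_C_mul_T (1 : F) n

@[simp] lemma ev1_C (a : F) : ev1 (C a : LaurentPolynomial F) = a := by
  simpa using ev1_C_mul_T a 0

lemma ev1_invert (f : LaurentPolynomial F) : ev1 (invert f) = ev1 f := by
  induction f using LaurentPolynomial.induction_on' with
  | add p q hp hq => simp [map_add, hp, hq]
  | C_mul_T n a => simp [map_mul]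

lemma ev1_toLaurent (P : Polynomial F) : ev1 (Polynomial.toLaurent P) = P.eval 1 := by
  have : (ev1.comp (Polynomial.toLaurent (R := F))) = Polynomial.evalRingHom (1 : F) := by
    apply Polynomial.ringHom_ext <;> simp [Polynomial.toLaurent_X]
  simpa using congrFun (congrArg (fun h => h.toFun) this) P

lemma dvd_of_ev1_eq_zero {g : LaurentPolynomial F} (h : ev1 g = 0) :
    (T 1 - 1 : LaurentPolynomial F) ∣ g := by
  obtain ⟨n, P, hP⟩ := g.exists_T_pow
  have hroot : P.eval 1 = 0 := by
    rw [← ev1_toLaurent, hP, map_mul, h, zero_mul]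
  have hdvd : (Polynomial.X - Polynomial.C 1) ∣ P := Polynomial.dvd_iff_isRoot.mpr hroot
  have : (T 1 - 1 : LaurentPolynomial F) ∣ g * T n := by
    obtain ⟨Q, hQ⟩ := hdvd
    refine ⟨Polynomial.toLaurent Q, ?_⟩
    rw [← hP, hQ]
    simp [Polynomial.toLaurent_X, sub_mul]
  obtain ⟨R, hR⟩ := this
  refine ⟨R * T (-n), ?_⟩
  have h2 := congrArg (fun z => z * T (-(n:ℤ))) hR
  simp only [mul_T_assoc, mul_assoc] at h2
  rw [← h2, ← T_add]
  simp

lemma unit_form {f : LaurentPolynomial F} (h : f * invert f = 1) :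
    ∃ (c : F) (n : ℤ), f = C c * T n := by
  obtain ⟨m, P, hP⟩ := f.exists_T_pow
  obtain ⟨k, Q, hQ⟩ := (invert f).exists_T_pow
  have hPQ : P * Q = Polynomial.X ^ (m + k) := by
    apply Polynomial.toLaurent_injective
    rw [map_mul, hP, hQ, Polynomial.toLaurent_X_pow]
    calc f * T m * ((invert f) * T k) = (f * invert f) * (T m * T k) := by ring
    _ = T (m + k : ℕ) := by rw [h, one_mul, ← T_add]; norm_cast
  have hdvd : P ∣ Polynomial.X ^ (m + k) := ⟨Q, hPQ.symm⟩
  obtain ⟨i, _, hassoc⟩ := (dvd_prime_pow Polynomial.prime_X (m + k)).mp hdvd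
  obtain ⟨u, hu⟩ := hassoc.symm
  obtain ⟨c, hc, hcu⟩ := Polynomial.isUnit_iff.mp u.isUnit
  refine ⟨c, (i : ℤ) - m, ?_⟩
  have hf : f = Polynomial.toLaurent P * T (-(m : ℤ)) := by
    rw [hP, mul_T_assoc]; simp
  rw [hf, ← hu, ← hcu, map_mul, Polynomial.toLaurent_X_pow, Polynomial.toLaurent_C,
    mul_comm (T (i:ℤ)) (C c), mul_T_assoc, sub_eq_add_neg]

end Helpers

/-- If `Rξ` is maximally isotropic, then `ξ` is reflection invariant:
`ξ* = uⁿ ξ` for some integer `n`. -/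
theorem max_isotropic_reflection_invariant (p : ℕ) [Fact p.Prime]
    (ξ : LaurentPolynomial (ZMod p) × LaurentPolynomial (ZMod p))
    (hiso : sig ξ ξ = 0)
    (hmax : ∀ η : LaurentPolynomial (ZMod p) × LaurentPolynomial (ZMod p),
      sig ξ η = 0 → ∃ f : LaurentPolynomial (ZMod p), η = (f * ξ.1, f * ξ.2)) :
    ∃ n : ℤ, invert ξ.1 = T n * ξ.1 ∧ invert ξ.2 = T n * ξ.2 := by
  by_cases h0 : ξ.1 = 0 ∧ ξ.2 = 0
  · exact ⟨0, by simp [h0.1, h0.2]⟩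
  obtain ⟨f, hf⟩ := hmax (invert ξ.1, invert ξ.2) (by simp only [sig]; ring)
  have hf1 : invert ξ.1 = f * ξ.1 := congrArg Prod.fst hf
  have hf2 : invert ξ.2 = f * ξ.2 := congrArg Prod.snd hf
  have hinv1 : ξ.1 = invert f * (f * ξ.1) := by
    have h := congrArg (invert (R := ZMod p)) hf1
    rw [map_mul, involutive_invert ξ.1] at h
    conv_lhs => rw [h, hf1]
  have hinv2 : ξ.2 = invert f * (f * ξ.2) := by
    have h := congrArg (invert (R := ZMod p)) hf2
    rw [map_mul, involutive_invert ξ.2] at h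
    conv_lhs => rw [h, hf2]
  have key : f * invert f = 1 := by
    rcases not_and_or.mp h0 with h | h
    · have : (f * invert f) * ξ.1 = 1 * ξ.1 := by linear_combination -hinv1
      exact mul_right_cancel₀ h this
    · have : (f * invert f) * ξ.2 = 1 * ξ.2 := by linear_combination -hinv2
      exact mul_right_cancel₀ h this
  obtain ⟨c, n, hfc⟩ := unit_form key
  have hcc : c * c = 1 := by
    have h := congrArg ev1 key
    rwa [map_mul, map_one, ev1_invert, hfc, ev1_C_mul_T] at h
  have hTn : ((-1 : ZMod p) = 1 → c = -1 → f = T n) ∧ (c = 1 → f = T n) := by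
    constructor
    · intro hne hc; rw [hfc, hc, hne]; simp
    · intro hc; rw [hfc, hc]; simp
  rcases mul_self_eq_one_iff.mp hcc with hc | hc
  · exact ⟨n, by rw [hf1, hTn.2 hc], by rw [hf2, hTn.2 hc]⟩
  by_cases hne : (-1 : ZMod p) = 1
  · exact ⟨n, by rw [hf1, hTn.1 hne hc], by rw [hf2, hTn.1 hne hc]⟩
  exfalso
  have h2 : ∀ x : ZMod p, x = -x → x = 0 := by
    intro x hx
    by_contra hx0
    apply hne
    have : x * (-1) = x * 1 := by rw [mul_one, mul_neg_one, ← hx]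
    exact mul_left_cancel₀ hx0 this
  have evf : ev1 f = -1 := by rw [hfc, ev1_C_mul_T, hc]
  have e1 : ev1 ξ.1 = 0 := by
    apply h2
    have h := congrArg ev1 hf1
    rwa [ev1_invert, map_mul, evf, neg_one_mul] at h
  have e2 : ev1 ξ.2 = 0 := by
    apply h2
    have h := congrArg ev1 hf2
    rwa [ev1_invert, map_mul, evf, neg_one_mul] at h
  obtain ⟨g1, hg1⟩ := dvd_of_ev1_eq_zero e1
  obtain ⟨g2, hg2⟩ := dvd_of_ev1_eq_zero e2
  obtain ⟨f₀, hη⟩ := hmax (g1, g2) (by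
    simp only [sig]; rw [hf1, hf2, hg1, hg2]; ring)
  have hη1 : g1 = f₀ * ξ.1 := congrArg Prod.fst hη
  have hη2 : g2 = f₀ * ξ.2 := congrArg Prod.snd hη
  have hd1 : f₀ * (T 1 - 1) = 1 := by
    rcases not_and_or.mp h0 with h | h
    · have hgne : g1 ≠ 0 := fun hz => h (by rw [hg1, hz, mul_zero])
      have : (f₀ * (T 1 - 1)) * g1 = 1 * g1 := by
        linear_combination (-1 : LaurentPolynomial (ZMod p)) * hη1 - f₀ * hg1
      exact mul_right_cancel₀ hgne this
    · have hgne : g2 ≠ 0 := fun hz => h (by rw [hg2, hz, mul_zero])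
      have : (f₀ * (T 1 - 1)) * g2 = 1 * g2 := by
        linear_combination (-1 : LaurentPolynomial (ZMod p)) * hη2 - f₀ * hg2
      exact mul_right_cancel₀ hgne this
  have := congrArg ev1 hd1
  rw [map_mul, map_one, map_sub, ev1_T, map_one, sub_self, mul_zero] at this
  exact zero_ne_one this
end

section
/- If a 2×2 matrix t over R = F_p[u,u^{-1}] preserves the symplectic form σ̂, then there exists a ∈ ℤ (an integer, not merely a half-integer) such that every entry f of t satisfies f = u^{2a} f*, and det(t) = u^{2a}. -/
open LaurentPolynomial

/-- Action of a 2×2 matrix over `R` on a phase space vector in `R²`. -/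
noncomputable def app {p : ℕ} (t : Matrix (Fin 2) (Fin 2) (LaurentPolynomial (ZMod p)))
    (ξ : LaurentPolynomial (ZMod p) × LaurentPolynomial (ZMod p)) :
    LaurentPolynomial (ZMod p) × LaurentPolynomial (ZMod p) :=
  (t 0 0 * ξ.1 + t 0 1 * ξ.2, t 1 0 * ξ.1 + t 1 1 * ξ.2)

/-- First column of a 2×2 matrix, as a phase space vector. -/
def col1 {p : ℕ} (t : Matrix (Fin 2) (Fin 2) (LaurentPolynomial (ZMod p))) :
    LaurentPolynomial (ZMod p) × LaurentPolynomial (ZMod p) := (t 0 0, t 1 0)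

/-- Second column of a 2×2 matrix, as a phase space vector. -/
def col2 {p : ℕ} (t : Matrix (Fin 2) (Fin 2) (LaurentPolynomial (ZMod p))) :
    LaurentPolynomial (ZMod p) × LaurentPolynomial (ZMod p) := (t 0 1, t 1 1)


/-- Structure of units of Laurent polynomials over a field. -/
lemma aux_unit_structure {K : Type*} [Field K] (f g : LaurentPolynomial K)
    (h : f * g = 1) : ∃ (c : K) (k : ℤ), f = C c * T k := by
  obtain ⟨n, P, hP⟩ := f.exists_T_pow
  obtain ⟨m, Q, hQ⟩ := g.exists_T_pow
  have hPQ : P * Q = Polynomial.X ^ (n + m) := by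
    apply Polynomial.toLaurent_injective
    rw [map_mul, hP, hQ, Polynomial.toLaurent_X_pow]
    have hc : ((n + m : ℕ) : ℤ) = (n : ℤ) + (m : ℤ) := by push_cast; ring
    rw [hc, T_add]
    linear_combination (T (n : ℤ) * T (m : ℤ)) * h
  have hdvd : P ∣ Polynomial.X ^ (n + m) := ⟨Q, hPQ.symm⟩
  obtain ⟨i, -, hassoc⟩ := (dvd_prime_pow Polynomial.prime_X _).mp hdvd
  obtain ⟨u, hu⟩ := hassoc
  obtain ⟨r, -, hr⟩ := Polynomial.isUnit_iff.mp u⁻¹.isUnit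
  have hP2 : P = Polynomial.X ^ i * Polynomial.C r := by
    rw [hr, ← hu, mul_assoc]
    simp
  refine ⟨r, (i : ℤ) - n, ?_⟩
  have hf : f = Polynomial.toLaurent P * T (-(n : ℤ)) := by
    rw [hP, mul_T_assoc, add_neg_cancel, T_zero, mul_one]
  rw [hf, hP2, map_mul, Polynomial.toLaurent_X_pow, Polynomial.toLaurent_C,
    sub_eq_add_neg, T_add]
  ring

lemma aux_invert_eq_mapDomain {K : Type*} [CommSemiring K] (f : LaurentPolynomial K) :
    invert f = AddMonoidAlgebra.mapDomain (fun n : ℤ => -n) f := by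
  ext n
  have h2 : Function.Injective (fun n : ℤ => -n) := fun a b hab => by simpa using hab
  have := Finsupp.mapDomain_apply h2 f.coeff (-n)
  simp only [neg_neg] at this
  rw [invert_apply]
  exact this.symm

/-- The "parity" ring hom to the group algebra of `ZMod 2`. -/
noncomputable def pi2 (p : ℕ) :
    LaurentPolynomial (ZMod p) →+* AddMonoidAlgebra (ZMod p) (ZMod 2) :=
  AddMonoidAlgebra.mapDomainRingHom (ZMod p) (Int.castAddHom (ZMod 2))

lemma pi2_apply {p : ℕ} (f : LaurentPolynomial (ZMod p)) :
    pi2 p f = AddMonoidAlgebra.mapDomain (fun n : ℤ => (n : ZMod 2)) f := rfl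

lemma pi2_invert {p : ℕ} (f : LaurentPolynomial (ZMod p)) :
    pi2 p (invert f) = pi2 p f := by
  rw [pi2_apply, pi2_apply, aux_invert_eq_mapDomain]
  show AddMonoidAlgebra.ofCoeff _ = AddMonoidAlgebra.ofCoeff _
  congr 1
  show Finsupp.mapDomain _ (Finsupp.mapDomain (fun n : ℤ => -n) f.coeff) = _
  rw [← Finsupp.mapDomain_comp]
  congr 1
  funext n
  show ((-n : ℤ) : ZMod 2) = (n : ZMod 2)
  rw [Int.cast_neg, CharTwo.neg_eq]

lemma pi2_T {p : ℕ} (k : ℤ) :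
    pi2 p (T k) = AddMonoidAlgebra.single ((k : ZMod 2)) 1 := by
  rw [pi2_apply]
  show AddMonoidAlgebra.mapDomain _ (AddMonoidAlgebra.single k 1) = _
  rw [AddMonoidAlgebra.mapDomain_single]

lemma pi2_C {p : ℕ} (c : ZMod p) :
    pi2 p (C c) = AddMonoidAlgebra.single 0 c := by
  rw [pi2_apply]
  show AddMonoidAlgebra.mapDomain _ (AddMonoidAlgebra.single 0 c) = _
  rw [AddMonoidAlgebra.mapDomain_single]
  norm_num

/-- If a 2×2 matrix over `R` preserves `σ̂`, then there is an integer lattice point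
`a ∈ ℤ` such that every entry `f` of `t` satisfies `f = u^{2a} f*`, and
`det t = u^{2a}`. -/
theorem symplectic_reflection_and_det (p : ℕ) [Fact p.Prime]
    (t : Matrix (Fin 2) (Fin 2) (LaurentPolynomial (ZMod p)))
    (hpres : ∀ ξ η : LaurentPolynomial (ZMod p) × LaurentPolynomial (ZMod p),
        sig (app t ξ) (app t η) = sig ξ η) :
    ∃ a : ℤ, (∀ i j, t i j = T (2 * a) * invert (t i j)) ∧ t.det = T (2 * a) := by
  have hinv : ∀ f : LaurentPolynomial (ZMod p), invert (invert f) = f :=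
    fun f => involutive_invert f
  have h1 := hpres (1, 0) (0, 1)
  have h2 := hpres (1, 0) (1, 0)
  have h3 := hpres (0, 1) (0, 1)
  simp only [sig, app, mul_one, mul_zero, zero_add, add_zero, map_one, map_zero,
    one_mul, zero_mul, sub_zero, zero_sub] at h1 h2 h3
  -- h1 : invert (t 0 0) * t 1 1 - invert (t 1 0) * t 0 1 = 1
  have h1i := congrArg invert h1
  have h2i := congrArg invert h2
  have h3i := congrArg invert h3
  simp only [map_sub, map_mul, map_one, map_zero, hinv] at h1i h2i h3i
  set E : LaurentPolynomial (ZMod p) := t 0 0 * t 1 1 - t 0 1 * t 1 0 with hEdef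
  have eA : E * invert (t 0 0) = t 0 0 := by
    linear_combination (t 0 0) * h1 + (t 0 1) * h2i
  have eB : E * invert (t 0 1) = t 0 1 := by
    linear_combination (t 0 1) * h1i - (t 0 0) * h3i
  have eC : E * invert (t 1 0) = t 1 0 := by
    linear_combination (t 1 0) * h1 + (t 1 1) * h2i
  have eD : E * invert (t 1 1) = t 1 1 := by
    linear_combination (t 1 1) * h1i - (t 1 0) * h3i
  have eE : E * invert E = 1 := by
    rw [hEdef, map_sub, map_mul, map_mul]
    linear_combination invert (t 1 1) * eA - invert (t 0 1) * eC + h1i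
  obtain ⟨c, k, hEck⟩ := aux_unit_structure E (invert E) eE
  have hπ : pi2 p E = 1 := by
    have hq := congrArg (pi2 p) h1
    simp only [map_sub, map_mul, map_one, pi2_invert] at hq
    rw [hEdef, map_sub, map_mul, map_mul]
    linear_combination hq
  rw [hEck, map_mul, pi2_C, pi2_T, AddMonoidAlgebra.single_mul_single, zero_add,
    mul_one, AddMonoidAlgebra.one_def] at hπ
  rcases AddMonoidAlgebra.single_inj.mp hπ with ⟨hk0, hc1⟩ | ⟨-, hcon⟩
  · obtain ⟨a, ha⟩ := (ZMod.intCast_zmod_eq_zero_iff_dvd k 2).mp hk0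
    have hET : E = T (2 * a) := by
      rw [hEck, hc1, map_one, one_mul, ha]; norm_num
    refine ⟨a, ?_, ?_⟩
    · intro i j
      fin_cases i <;> fin_cases j
      · rw [← hET]; exact eA.symm
      · rw [← hET]; exact eB.symm
      · rw [← hET]; exact eC.symm
      · rw [← hET]; exact eD.symm
    · rw [Matrix.det_fin_two, ← hEdef, hET]
  · exact absurd hcon one_ne_zero
end

section
/- Conversely: if a 2×2 matrix t over R = F_p[u,u^{-1}] has all entries reflection invariant with respect to a lattice point a ∈ ℤ (entry f satisfies f = u^{2a} f*) and det(t) = u^{2a}, then t preserves the symplectic form σ̂. -/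
open LaurentPolynomial

/-- Conversely, if all entries of a 2×2 matrix `t` over `R` are reflection invariant
with respect to a lattice point `a ∈ ℤ` and `det t = u^{2a}`, then `t` preserves
the symplectic form `σ̂`. -/
theorem reflection_and_det_symplectic (p : ℕ) [Fact p.Prime]
    (t : Matrix (Fin 2) (Fin 2) (LaurentPolynomial (ZMod p))) (a : ℤ)
    (hrefl : ∀ i j, t i j = T (2 * a) * invert (t i j))
    (hdet : t.det = T (2 * a)) :
    ∀ ξ η : LaurentPolynomial (ZMod p) × LaurentPolynomial (ZMod p),
      sig (app t ξ) (app t η) = sig ξ η := by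
  intro ξ η
  have hd : t 0 0 * t 1 1 - t 0 1 * t 1 0 = T (2 * a) := by
    rw [← Matrix.det_fin_two t]; exact hdet
  have hkey : T (2 * a) *
      (invert (t 0 0) * invert (t 1 1) - invert (t 0 1) * invert (t 1 0)) = 1 := by
    have h2 := congrArg invert hd
    simp only [map_sub, map_mul, invert_T] at h2
    rw [h2, ← T_add]
    simp
  simp only [sig, app, map_add, map_mul]
  linear_combination (invert (t 0 0) * invert ξ.1 + invert (t 0 1) * invert ξ.2) *
      (η.1 * (hrefl 1 0) + η.2 * (hrefl 1 1)) -
    (invert (t 1 0) * invert ξ.1 + invert (t 1 1) * invert ξ.2) *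
      (η.1 * (hrefl 0 0) + η.2 * (hrefl 0 1)) +
    (invert ξ.1 * η.2 - invert ξ.2 * η.1) * hkey
end

section
/- Every cyclic isotropic submodule Rξ ⊆ R² (with ξ ≠ 0) embeds in a cyclic maximally isotropic submodule: there exists η ∈ R² with Rξ ⊆ Rη and Rη maximally isotropic. -/
open LaurentPolynomial

/-- Every nonzero cyclic isotropic submodule `Rξ ⊆ R²` embeds into a cyclic
maximally isotropic submodule `Rη`. -/
theorem isotropic_embeds_max_isotropic (p : ℕ) [Fact p.Prime]
    (ξ : LaurentPolynomial (ZMod p) × LaurentPolynomial (ZMod p))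
    (hne : ξ ≠ 0) (hiso : sig ξ ξ = 0) :
    ∃ η : LaurentPolynomial (ZMod p) × LaurentPolynomial (ZMod p),
      (∃ f : LaurentPolynomial (ZMod p), ξ = (f * η.1, f * η.2)) ∧
      sig η η = 0 ∧
      (∀ lam : LaurentPolynomial (ZMod p) × LaurentPolynomial (ZMod p),
        sig η lam = 0 → ∃ g : LaurentPolynomial (ZMod p), lam = (g * η.1, g * η.2)) := by
  classical
  -- clear denominators
  obtain ⟨n₁, g₁, hg₁⟩ := exists_T_pow ξ.1
  obtain ⟨n₂, g₂, hg₂⟩ := exists_T_pow ξ.2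
  set d : Polynomial (ZMod p) := EuclideanDomain.gcd g₁ g₂ with hd
  set D : LaurentPolynomial (ZMod p) := Polynomial.toLaurent d with hD
  -- D ≠ 0
  have hTunit : ∀ n : ℤ, (T n : LaurentPolynomial (ZMod p)) * T (-n) = 1 := by
    intro n; rw [← T_add, add_neg_cancel, T_zero]
  have hx1 : ξ.1 = Polynomial.toLaurent g₁ * T (-(n₁ : ℤ)) := by
    rw [hg₁, mul_assoc, hTunit, mul_one]
  have hx2 : ξ.2 = Polynomial.toLaurent g₂ * T (-(n₂ : ℤ)) := by
    rw [hg₂, mul_assoc, hTunit, mul_one]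
  have hDne : D ≠ 0 := by
    intro h
    have hd0 : d = 0 := by rwa [hD, Polynomial.toLaurent_eq_zero] at h
    rw [EuclideanDomain.gcd_eq_zero_iff] at hd0
    apply hne
    have : ξ.1 = 0 ∧ ξ.2 = 0 := by
      constructor
      · rw [hx1, hd0.1]; simp
      · rw [hx2, hd0.2]; simp
    exact Prod.ext this.1 this.2
  -- define η
  obtain ⟨e₁, he₁⟩ : D ∣ ξ.1 := by
    obtain ⟨k, hk⟩ := EuclideanDomain.gcd_dvd_left g₁ g₂
    exact ⟨Polynomial.toLaurent k * T (-(n₁ : ℤ)), by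
      rw [hx1, hk]; push_cast [map_mul]; ring⟩
  obtain ⟨e₂, he₂⟩ : D ∣ ξ.2 := by
    obtain ⟨k, hk⟩ := EuclideanDomain.gcd_dvd_right g₁ g₂
    exact ⟨Polynomial.toLaurent k * T (-(n₂ : ℤ)), by
      rw [hx2, hk]; push_cast [map_mul]; ring⟩
  -- coprimality of e₁ e₂
  have hbez : D = Polynomial.toLaurent g₁ * Polynomial.toLaurent (EuclideanDomain.gcdA g₁ g₂)
      + Polynomial.toLaurent g₂ * Polynomial.toLaurent (EuclideanDomain.gcdB g₁ g₂) := by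
    rw [hD, hd, EuclideanDomain.gcd_eq_gcd_ab g₁ g₂]
    push_cast [map_add, map_mul]; ring
  have hcop : IsCoprime e₁ e₂ := by
    refine ⟨T (n₁ : ℤ) * Polynomial.toLaurent (EuclideanDomain.gcdA g₁ g₂),
      T (n₂ : ℤ) * Polynomial.toLaurent (EuclideanDomain.gcdB g₁ g₂), ?_⟩
    have key : D * (T (n₁ : ℤ) * Polynomial.toLaurent (EuclideanDomain.gcdA g₁ g₂) * e₁
        + T (n₂ : ℤ) * Polynomial.toLaurent (EuclideanDomain.gcdB g₁ g₂) * e₂) = D * 1 := by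
      rw [mul_one]
      calc D * (T (n₁ : ℤ) * Polynomial.toLaurent (EuclideanDomain.gcdA g₁ g₂) * e₁
          + T (n₂ : ℤ) * Polynomial.toLaurent (EuclideanDomain.gcdB g₁ g₂) * e₂)
          = (D * e₁ * T (n₁ : ℤ)) * Polynomial.toLaurent (EuclideanDomain.gcdA g₁ g₂)
          + (D * e₂ * T (n₂ : ℤ)) * Polynomial.toLaurent (EuclideanDomain.gcdB g₁ g₂) := by ring
        _ = Polynomial.toLaurent g₁ * Polynomial.toLaurent (EuclideanDomain.gcdA g₁ g₂)
          + Polynomial.toLaurent g₂ * Polynomial.toLaurent (EuclideanDomain.gcdB g₁ g₂) := by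
            rw [← he₁, ← he₂, ← hg₁, ← hg₂]
        _ = D := hbez.symm
    exact mul_left_cancel₀ hDne key
  have hiso2 : sig (e₁, e₂) (e₁, e₂) = 0 := by
    have h0 : sig ξ ξ = invert D * D * sig (e₁, e₂) (e₁, e₂) := by
      simp only [sig, he₁, he₂, map_mul]; ring
    rw [hiso] at h0
    have hiD : invert D ≠ 0 := by
      intro h; exact hDne (by simpa using congrArg invert.symm h)
    rcases mul_eq_zero.mp h0.symm with h | h
    · rcases mul_eq_zero.mp h with h' | h'
      · exact absurd h' hiD
      · exact absurd h' hDne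
    · exact h
  refine ⟨(e₁, e₂), ⟨D, Prod.ext he₁ he₂⟩, hiso2, ?_⟩
  · -- maximality
    intro lam hl
    simp only [sig, sub_eq_zero] at hl
    by_cases hc1 : e₁ = 0
    · have hu : IsUnit e₂ := isCoprime_zero_left.mp (hc1 ▸ hcop)
      have hl1 : lam.1 = 0 := by
        rw [hc1] at hl
        simp only [map_zero, zero_mul] at hl
        have hiu : invert e₂ ≠ 0 := fun h =>
          hu.ne_zero (by simpa using congrArg invert.symm h)
        exact (mul_eq_zero.mp hl.symm).resolve_left hiu
      obtain ⟨v, hv⟩ := hu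
      exact ⟨lam.2 * ↑v⁻¹, Prod.ext (by simp [hl1, hc1]) (by simp [← hv, mul_assoc])⟩
    · have hii : invert e₁ ≠ 0 := by
        intro h; exact hc1 (by simpa using congrArg invert.symm h)
      have hsη : invert e₂ * e₁ = invert e₁ * e₂ := by
        have h := hiso2
        simp only [sig, sub_eq_zero] at h
        exact h.symm
      have key : e₁ * lam.2 = e₂ * lam.1 := by
        apply mul_left_cancel₀ hii
        calc invert e₁ * (e₁ * lam.2) = e₁ * (invert e₁ * lam.2) := by ring
          _ = e₁ * (invert e₂ * lam.1) := by rw [hl]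
          _ = (invert e₂ * e₁) * lam.1 := by ring
          _ = (invert e₁ * e₂) * lam.1 := by rw [hsη]
          _ = invert e₁ * (e₂ * lam.1) := by ring
      have hdvd : e₁ ∣ lam.1 := by
        apply hcop.dvd_of_dvd_mul_right
        exact ⟨lam.2, by rw [key]; ring⟩
      obtain ⟨g, hg⟩ := hdvd
      refine ⟨g, Prod.ext (by rw [hg]; ring) ?_⟩
      have h2 : e₁ * lam.2 = e₁ * (g * e₂) := by rw [key, hg]; ring
      exact mul_left_cancel₀ hc1 h2
end

section
/- Let ξ ∈ R² with ξ* = ξ (reflection invariant about the origin) and gcd(ξ₊, ξ₋) = 1. Then there exists η ∈ R² with η* = η, σ̂(η,η) = 0, and σ̂(η, ξ) = 1; consequently the matrix with columns (ξ, η) lies in SL₂ of the reflection-invariant subring. -/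
open LaurentPolynomial

/-- Bézout identity in the Laurent polynomial ring over a field, from the
Euclidean algorithm in the polynomial ring. -/
lemma laurent_bezout (p : ℕ) [Fact p.Prime] (x y : LaurentPolynomial (ZMod p))
    (h : ∀ d : LaurentPolynomial (ZMod p), d ∣ x → d ∣ y → IsUnit d) :
    ∃ a b : LaurentPolynomial (ZMod p), a * x + b * y = 1 := by
  obtain ⟨n, P, hP⟩ := exists_T_pow x
  obtain ⟨m, Q, hQ⟩ := exists_T_pow y
  set A := EuclideanDomain.gcdA P Q with hA
  set B := EuclideanDomain.gcdB P Q with hB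
  have hg : Polynomial.toLaurent (EuclideanDomain.gcd P Q) =
      (x * T n) * Polynomial.toLaurent A + (y * T m) * Polynomial.toLaurent B := by
    rw [← hP, ← hQ, ← map_mul, ← map_mul, ← map_add]
    exact congrArg _ (EuclideanDomain.gcd_eq_gcd_ab P Q)
  have hdx : Polynomial.toLaurent (EuclideanDomain.gcd P Q) ∣ x := by
    have h1 : Polynomial.toLaurent (EuclideanDomain.gcd P Q) ∣ x * T n :=
      hP ▸ map_dvd _ (EuclideanDomain.gcd_dvd_left P Q)
    have h2 : x * T n * T (-n) = x := by
      rw [mul_assoc, ← T_add]; simp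
    exact h2 ▸ h1.mul_right (T (-n))
  have hdy : Polynomial.toLaurent (EuclideanDomain.gcd P Q) ∣ y := by
    have h1 : Polynomial.toLaurent (EuclideanDomain.gcd P Q) ∣ y * T m :=
      hQ ▸ map_dvd _ (EuclideanDomain.gcd_dvd_right P Q)
    have h2 : y * T m * T (-m) = y := by
      rw [mul_assoc, ← T_add]; simp
    exact h2 ▸ h1.mul_right (T (-m))
  obtain ⟨u, hu⟩ := (h _ hdx hdy).exists_right_inv
  exact ⟨T n * Polynomial.toLaurent A * u, T m * Polynomial.toLaurent B * u,
    by linear_combination hu - u * hg⟩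

/-- An antisymmetric Laurent polynomial with vanishing constant term is of the
form `f - f*`. -/
lemma exists_truncation (p : ℕ) [Fact p.Prime] (c : LaurentPolynomial (ZMod p))
    (hinvc : invert c = -c) (hc0 : c.coeff 0 = 0) :
    ∃ f : LaurentPolynomial (ZMod p), f - invert f = c := by
  classical
  have hneg : ∀ m : ℤ, c.coeff (-m) = - c.coeff m := by
    intro m
    have h1 : (invert c).coeff m = c.coeff (-m) := invert_apply c m
    rw [hinvc] at h1
    rw [← h1, AddMonoidAlgebra.coeff_neg, Finsupp.neg_apply]
  have key : ∀ F : LaurentPolynomial (ZMod p),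
      (∀ n : ℤ, F.coeff n = if 0 < n then c.coeff n else 0) → F - invert F = c := by
    intro F hF
    ext n
    have hsub : (F - invert F).coeff n = F.coeff n - (invert F).coeff n := Finsupp.sub_apply _ _ _
    rw [hsub, invert_apply, hF, hF]
    rcases lt_trichotomy n 0 with h | h | h
    · rw [if_neg (by omega : ¬ (0 < n)), if_pos (by omega : (0:ℤ) < -n), hneg]
      ring
    · subst h
      rw [neg_zero, if_neg (by omega : ¬ ((0:ℤ) < 0)), hc0]
      ring
    · rw [if_pos h, if_neg (by omega : ¬ ((0:ℤ) < -n))]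
      ring
  exact ⟨AddMonoidAlgebra.ofCoeff (Finsupp.filter (fun n : ℤ => 0 < n) c.coeff), key _ (fun n => by
    by_cases h : 0 < n
    · rw [if_pos h]; exact Finsupp.filter_apply_pos _ _ h
    · rw [if_neg h]; exact Finsupp.filter_apply_neg _ _ h)⟩

/-- If `ξ` is reflection invariant about the origin (`ξ* = ξ`) with coprime
components, then there is a reflection-invariant `η` with `σ̂(η,η) = 0` and
`σ̂(η,ξ) = 1`; the matrix with columns `(η, ξ)` then lies in `SL₂` of the
reflection-invariant subring. -/
theorem complete_to_sca (p : ℕ) [Fact p.Prime]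
    (ξ : LaurentPolynomial (ZMod p) × LaurentPolynomial (ZMod p))
    (h₁ : invert ξ.1 = ξ.1) (h₂ : invert ξ.2 = ξ.2)
    (hcop : ∀ d : LaurentPolynomial (ZMod p), d ∣ ξ.1 → d ∣ ξ.2 → IsUnit d) :
    ∃ η : LaurentPolynomial (ZMod p) × LaurentPolynomial (ZMod p),
      invert η.1 = η.1 ∧ invert η.2 = η.2 ∧ sig η η = 0 ∧ sig η ξ = 1 ∧
      (!![η.1, ξ.1; η.2, ξ.2] : Matrix (Fin 2) (Fin 2) (LaurentPolynomial (ZMod p))).det = 1 := by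
  obtain ⟨a, b, hab⟩ := laurent_bezout p ξ.1 ξ.2 hcop
  have hinv1 : invert a * ξ.1 + invert b * ξ.2 = 1 := by
    have h := congrArg invert hab
    rw [map_add, map_mul, map_mul, map_one, h₁, h₂] at h
    exact h
  set c : LaurentPolynomial (ZMod p) := a * invert b - b * invert a with hc
  have hinvc : invert c = -c := by
    rw [hc, map_sub, map_mul, map_mul, involutive_invert a, involutive_invert b]
    ring
  have hc0 : c.coeff 0 = 0 := by
    have key : ∀ x y : LaurentPolynomial (ZMod p), (x * invert y).coeff 0 = (invert x * y).coeff 0 := by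
      intro x y
      have h1 : (invert (x * invert y)).coeff 0 = (x * invert y).coeff (-(0:ℤ)) := invert_apply _ 0
      rw [neg_zero] at h1
      rw [← h1, map_mul, involutive_invert]
    have hsub : c.coeff 0 = (a * invert b).coeff 0 - (b * invert a).coeff 0 := by
      rw [hc]; exact Finsupp.sub_apply _ _ _
    rw [hsub, key a b, mul_comm (invert a) b]
    exact sub_self _
  obtain ⟨f, hfc⟩ := exists_truncation p c hinvc hc0
  have hcξ1 : c * ξ.1 = invert b - b := by
    linear_combination ξ.1 * hc + invert b * hab - b * hinv1
  have hcξ2 : c * ξ.2 = a - invert a := by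
    linear_combination ξ.2 * hc - invert a * hab + a * hinv1
  have hη1 : invert (b + f * ξ.1) = b + f * ξ.1 := by
    rw [map_add, map_mul, h₁]
    linear_combination (- ξ.1) * hfc - hcξ1
  have hη2 : invert (-a + f * ξ.2) = -a + f * ξ.2 := by
    rw [map_add, map_neg, map_mul, h₂]
    linear_combination (- ξ.2) * hfc - hcξ2
  refine ⟨(b + f * ξ.1, -a + f * ξ.2), hη1, hη2, ?_, ?_, ?_⟩
  · show invert (b + f * ξ.1) * (-a + f * ξ.2) - invert (-a + f * ξ.2) * (b + f * ξ.1) = 0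
    rw [hη1, hη2]; ring
  · show invert (b + f * ξ.1) * ξ.2 - invert (-a + f * ξ.2) * ξ.1 = 1
    rw [hη1, hη2]
    linear_combination hab
  · rw [Matrix.det_fin_two_of]
    show (b + f * ξ.1) * ξ.2 - ξ.1 * (-a + f * ξ.2) = 1
    linear_combination hab
end

section
/- Let p be prime and let t be a 2×2 matrix over R = F_p[u,u^{-1}] preserving the symplectic form σ̂ with det(t) = 1 (a centered symplectic cellular automaton). Then t is a finite product of shear matrices G(f) = [[1,0],[f,1]] with f reflection invariant (f = f*) and local Fourier matrices F(c) = [[0,−c^{-1}],[c,0]] with c ∈ F_p \ {0}. -/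
open LaurentPolynomial

/-- Shear matrix `G(f) = [[1,0],[f,1]]`. -/
noncomputable def G {p : ℕ} (f : LaurentPolynomial (ZMod p)) :
    Matrix (Fin 2) (Fin 2) (LaurentPolynomial (ZMod p)) := !![1, 0; f, 1]

/-- Local Fourier transform `F(c) = [[0, −c⁻¹],[c, 0]]` for `c ∈ F_p \ {0}`. -/
noncomputable def Fou {p : ℕ} [Fact p.Prime] (c : ZMod p) :
    Matrix (Fin 2) (Fin 2) (LaurentPolynomial (ZMod p)) := !![0, C (-c⁻¹); C c, 0]


namespace SCA
variable {p : ℕ} [Fact p.Prime]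

local notation "R" => LaurentPolynomial (ZMod p)

/-- symmetric degree: max |k| over the support. -/
noncomputable def Dg (f : R) : ℕ := f.coeff.support.sup fun k => k.natAbs

lemma apply_eq_zero_of_dg_lt {f : R} {k : ℤ} (h : Dg f < k.natAbs) : f.coeff k = 0 := by
  by_contra hne
  have h2 : k.natAbs ≤ f.coeff.support.sup (fun k : ℤ => k.natAbs) :=
    Finset.le_sup (Finsupp.mem_support_iff.2 hne)
  unfold Dg at h
  omega

lemma dg_le {f : R} {n : ℕ} (h : ∀ k ∈ f.coeff.support, k.natAbs ≤ n) : Dg f ≤ n :=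
  Finset.sup_le h

lemma symm_apply {f : R} (hf : invert f = f) (n : ℤ) : f.coeff (-n) = f.coeff n := by
  conv_rhs => rw [← hf, invert_apply]

lemma top_ne_zero {f : R} (hf : invert f = f) (h0 : f ≠ 0) : f.coeff ((Dg f : ℤ)) ≠ 0 := by
  obtain ⟨k, hk, hsup⟩ := Finset.exists_mem_eq_sup f.coeff.support
    (Finsupp.support_nonempty_iff.2 (mt AddMonoidAlgebra.coeff_eq_zero.1 h0)) (fun k : ℤ => k.natAbs)
  have hk' := Finsupp.mem_support_iff.1 hk
  rcases Int.natAbs_eq k with h | h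
  · rw [show ((Dg f : ℤ)) = k by rw [Dg, hsup]; omega]; exact hk'
  · have : ((Dg f : ℤ)) = -k := by rw [Dg, hsup]; omega
    rw [this, symm_apply hf]; exact hk'


lemma division (c : R) (hc0 : c ≠ 0) (hci : invert c = c) :
    ∀ m : ℕ, ∀ a : R, invert a = a → Dg a ≤ m →
      ∃ q r : R, invert q = q ∧ invert r = r ∧ a = q * c + r ∧ (r = 0 ∨ Dg r < Dg c) := by
  intro m
  induction m using Nat.strong_induction_on with
  | _ m IH =>
  intro a hai ham
  by_cases hlt : Dg a < Dg c
  · exact ⟨0, a, by simp [map_zero], hai, by simp, Or.inr hlt⟩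
  by_cases ha0 : a = 0
  · exact ⟨0, 0, by simp [map_zero], by simp [map_zero], by simp [ha0], Or.inl rfl⟩
  push_neg at hlt
  set M := Dg a with hM
  set n := Dg c with hn
  set α := a.coeff ((M : ℤ)) with hα'
  set γ := c.coeff ((n : ℤ)) with hγ'
  have hα : α ≠ 0 := top_ne_zero hai ha0
  have hγ : γ ≠ 0 := top_ne_zero hci hc0
  set e : ZMod p := α * γ⁻¹ with he
  set s : ℤ := (M : ℤ) - n with hs
  have hs0 : 0 ≤ s := by omega
  set e' : ZMod p := if s = 0 then 0 else e with he'
  set q₀ : R := AddMonoidAlgebra.single s e + AddMonoidAlgebra.single (-s) e' with hq₀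
  have hq₀i : invert q₀ = q₀ := by
    rw [hq₀]
    by_cases h0 : s = 0
    · simp [h0]
    · simp only [he', if_neg h0, map_add]
      rw [show (AddMonoidAlgebra.single s e : R) = C e * T s by rw [single_eq_C_mul_T],
          show (AddMonoidAlgebra.single (-s) e : R) = C e * T (-s) by rw [single_eq_C_mul_T]]
      simp only [map_mul, invert_C, invert_T]
      rw [neg_neg, add_comm]
  set a' : R := a - q₀ * c with ha'
  have ha'i : invert a' = a' := by
    rw [ha', map_sub, map_mul, hai, hci, hq₀i]
  have hcsupp : ∀ k : ℤ, n < k.natAbs → c.coeff k = 0 := fun k hk => apply_eq_zero_of_dg_lt hk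
  have hasupp : ∀ k : ℤ, M < k.natAbs → a.coeff k = 0 := fun k hk => apply_eq_zero_of_dg_lt hk
  have hcoeff : ∀ k : ℤ, a'.coeff k = a.coeff k - (e * c.coeff (-s + k) + e' * c.coeff (s + k)) := by
    intro k
    have : (q₀ * c).coeff k = e * c.coeff (-s + k) + e' * c.coeff (s + k) := by
      rw [hq₀, add_mul]
      rw [AddMonoidAlgebra.coeff_add, Finsupp.add_apply]
      rw [AddMonoidAlgebra.coeff_single_mul_apply, AddMonoidAlgebra.coeff_single_mul_apply, neg_neg]
    rw [ha']
    rw [AddMonoidAlgebra.coeff_sub, Finsupp.sub_apply]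
    rw [this]
  have key0 : ∀ k : ℤ, 0 ≤ k → (M : ℤ) ≤ k → a'.coeff k = 0 := by
    intro k hk0 hkM
    rw [hcoeff]
    rcases eq_or_lt_of_le hkM with h | h
    · -- k = M
      rw [← h]
      have h1 : -s + (M : ℤ) = (n : ℤ) := by omega
      by_cases h0 : s = 0
      · rw [h1, he', if_pos h0, zero_mul, add_zero, ← hγ', ← hα', he]
        field_simp
        ring
      · have h2 : c.coeff (s + (M : ℤ)) = 0 := hcsupp _ (by omega)
        rw [h1, h2, he', if_neg h0, mul_zero, add_zero, ← hγ', ← hα', he]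
        field_simp
        ring
    · -- k > M
      rw [hasupp k (by omega), hcsupp (-s + k) (by omega), hcsupp (s + k) (by omega)]
      simp
  have key : ∀ k : ℤ, M ≤ k.natAbs → a'.coeff k = 0 := by
    intro k hk
    rcases le_or_gt 0 k with h | h
    · exact key0 k h (by omega)
    · have h2 := symm_apply ha'i (-k)
      rw [neg_neg] at h2
      rw [h2]
      exact key0 (-k) (by omega) (by omega)
  by_cases hM0 : M = 0
  · have : a' = 0 := by
      ext k
      exact key k (by omega)
    refine ⟨q₀, 0, hq₀i, by simp [map_zero], ?_, Or.inl rfl⟩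
    have : a - q₀ * c = 0 := this
    rw [← sub_eq_zero]; simpa using this
  · have hda' : Dg a' ≤ M - 1 := by
      apply dg_le
      intro k hk
      by_contra hcon
      exact absurd (key k (by omega)) (Finsupp.mem_support_iff.1 hk)
    obtain ⟨q', r', hq'i, hr'i, heq, hsm⟩ := IH (M - 1) (by omega) a' ha'i hda'
    refine ⟨q₀ + q', r', by rw [map_add, hq₀i, hq'i], hr'i, ?_, hsm⟩
    have : a = a' + q₀ * c := by rw [ha']; ring
    rw [this, heq]; ring


lemma mul_apply_top (a d : R) (m k : ℤ) (ha : ∀ x ∈ a.coeff.support, x ≤ m)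
    (hd : ∀ y ∈ d.coeff.support, y ≤ k) : (a * d).coeff (m + k) = a.coeff m * d.coeff k := by
  classical
  rw [AddMonoidAlgebra.coeff_mul]
  rw [Finsupp.sum]
  simp only [Finsupp.sum]
  rw [Finset.sum_eq_single m]
  · rw [Finset.sum_eq_single k]
    · rw [if_pos rfl]
    · intro y hy hyk
      exact if_neg (by intro hc; exact hyk (by omega))
    · intro hk
      rw [Finsupp.notMem_support_iff.1 hk, if_pos rfl, mul_zero]
  · intro x hx hxm
    apply Finset.sum_eq_zero
    intro y hy
    have h1 := ha x hx
    have h2 := hd y hy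
    exact if_neg (by intro hc; omega)
  · intro hm
    apply Finset.sum_eq_zero
    intro y hy
    simp [Finsupp.notMem_support_iff.1 hm]

lemma unit_const {a d : R} (h : a * d = 1) (ha : invert a = a) (hd : invert d = d) :
    a = C (a.coeff 0) ∧ a.coeff 0 ≠ 0 ∧ d = C ((a.coeff 0)⁻¹) := by
  have ha0 : a ≠ 0 := by rintro rfl; rw [zero_mul] at h; exact one_ne_zero h.symm
  have hd0 : d ≠ 0 := by rintro rfl; rw [mul_zero] at h; exact one_ne_zero h.symm
  have hbound : ∀ (f : R) (N : ℕ), Dg f ≤ N → ∀ x ∈ f.coeff.support, x ≤ (N : ℤ) := by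
    intro f N hN x hx
    have h2 : x.natAbs ≤ f.coeff.support.sup (fun k : ℤ => k.natAbs) := Finset.le_sup hx
    have : Dg f = f.coeff.support.sup (fun k : ℤ => k.natAbs) := rfl
    omega
  have htop : (a * d).coeff ((Dg a : ℤ) + (Dg d : ℤ)) = a.coeff (Dg a) * d.coeff (Dg d) :=
    mul_apply_top a d _ _ (hbound a _ le_rfl) (hbound d _ le_rfl)
  have hne : a.coeff ((Dg a : ℤ)) * d.coeff ((Dg d : ℤ)) ≠ 0 :=
    mul_ne_zero (top_ne_zero ha ha0) (top_ne_zero hd hd0)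
  rw [h] at htop
  have hone : ∀ j : ℤ, (1 : R).coeff j = if (0 : ℤ) = j then 1 else 0 := by
    intro j
    rw [AddMonoidAlgebra.one_def, AddMonoidAlgebra.coeff_single]
    exact Finsupp.single_apply
  rw [hone] at htop
  have hdeg : Dg a = 0 ∧ Dg d = 0 := by
    by_contra hcon
    rw [if_neg (by omega)] at htop
    exact hne htop.symm
  have hsupp : ∀ (f : R), Dg f = 0 → f = C (f.coeff 0) := by
    intro f hf
    have : (AddMonoidAlgebra.single (0 : ℤ) (f.coeff 0) : R) = C (f.coeff 0) * T 0 := single_eq_C_mul_T _ _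
    rw [T_zero, mul_one] at this
    rw [← this]
    ext j
    rcases eq_or_ne j 0 with rfl | hj
    · rw [AddMonoidAlgebra.coeff_single, Finsupp.single_apply, if_pos rfl]
    · rw [AddMonoidAlgebra.coeff_single, Finsupp.single_apply, if_neg (Ne.symm hj),
        apply_eq_zero_of_dg_lt (f := f) (k := j) (by omega)]
  have haC := hsupp a hdeg.1
  have hdC := hsupp d hdeg.2
  have hprod : a.coeff 0 * d.coeff 0 = 1 := by
    have h0 : (a * d).coeff (0 : ℤ) = (1 : R).coeff 0 := by rw [h]
    rw [hone, if_pos rfl] at h0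
    rw [haC, hdC, ← map_mul] at h0
    rw [← h0]
    have : (C (a.coeff 0 * d.coeff 0) : R) = AddMonoidAlgebra.single 0 (a.coeff 0 * d.coeff 0) := by
      rw [single_eq_C_mul_T, T_zero, mul_one]
    rw [this, AddMonoidAlgebra.coeff_single, Finsupp.single_apply, if_pos rfl]
  have hane : a.coeff 0 ≠ 0 := left_ne_zero_of_mul_eq_one hprod
  refine ⟨haC, hane, ?_⟩
  rw [hdC, inv_eq_of_mul_eq_one_right hprod]


def Gens : Set (Matrix (Fin 2) (Fin 2) R) :=
  {m | ∃ f : LaurentPolynomial (ZMod p), invert f = f ∧ m = G f} ∪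
  {m | ∃ c : ZMod p, c ≠ 0 ∧ m = Fou c}

lemma G_mem {f : R} (hf : invert f = f) : G f ∈ Submonoid.closure (Gens (p := p)) :=
  Submonoid.subset_closure (Or.inl ⟨f, hf, rfl⟩)

lemma Fou_mem {c : ZMod p} (hc : c ≠ 0) : Fou c ∈ Submonoid.closure (Gens (p := p)) :=
  Submonoid.subset_closure (Or.inr ⟨c, hc, rfl⟩)

lemma neg_one_ne : ((-1 : ZMod p)) ≠ 0 := by
  simp only [ne_eq, neg_eq_zero]
  exact one_ne_zero

lemma zero_case (t : Matrix (Fin 2) (Fin 2) R)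
    (hi : ∀ i j, invert (t i j) = t i j) (hdet : t.det = 1) (hc : t 1 0 = 0) :
    t ∈ Submonoid.closure (Gens (p := p)) := by
  have hdet' : t 0 0 * t 1 1 - t 0 1 * t 1 0 = 1 := by rw [← Matrix.det_fin_two]; exact hdet
  rw [hc, mul_zero, sub_zero] at hdet'
  obtain ⟨haC, hα, hdC⟩ := unit_const hdet' (hi 0 0) (hi 1 1)
  set α := (t 0 0).coeff (0 : ℤ) with hαdef
  have hcc : (C α : R) * C α⁻¹ = 1 := by
    rw [← map_mul, mul_inv_cancel₀ hα, map_one]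
  have key : t = Fou (-1) * (Fou α * (Fou 1 * (G (-(C α⁻¹ * t 0 1)) * Fou (-1)))) := by
    rw [Matrix.eta_fin_two t, hc, haC, hdC, ← Matrix.ext_iff]
    intro i j
    fin_cases i <;> fin_cases j <;>
      simp only [Fou, G, Matrix.mul_fin_two, inv_neg_one, inv_one, neg_neg, map_one, map_neg,
        Matrix.cons_val', Matrix.cons_val_zero, Matrix.cons_val_one, Matrix.head_cons,
        Matrix.empty_val', Matrix.cons_val_fin_one, Matrix.head_fin_const, Matrix.of_apply,
        Fin.zero_eta, Fin.mk_one] <;>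
      first
        | linear_combination (-(t 0 1)) * hcc
        | linear_combination
  rw [key]
  exact mul_mem (Fou_mem neg_one_ne) (mul_mem (Fou_mem hα) (mul_mem (Fou_mem one_ne_zero)
    (mul_mem (G_mem (by rw [map_neg, map_mul, invert_C, hi 0 1])) (Fou_mem neg_one_ne))))

lemma main : ∀ (N : ℕ) (t : Matrix (Fin 2) (Fin 2) R),
    (∀ i j, invert (t i j) = t i j) → t.det = 1 → Dg (t 1 0) ≤ N →
    t ∈ Submonoid.closure (Gens (p := p)) := by
  intro N
  induction N using Nat.strong_induction_on with
  | _ N IH =>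
  intro t hi hdet hdg
  by_cases hc : t 1 0 = 0
  · exact zero_case t hi hdet hc
  · obtain ⟨q, r, hqi, hri, heq, hsm⟩ :=
      division (t 1 0) hc (hi 1 0) (Dg (t 0 0)) (t 0 0) (hi 0 0) le_rfl
    have hdet' : t 0 0 * t 1 1 - t 0 1 * t 1 0 = 1 := by rw [← Matrix.det_fin_two]; exact hdet
    set t' : Matrix (Fin 2) (Fin 2) R :=
      !![-(t 1 0), -(t 1 1); r, t 0 1 - q * t 1 1] with ht'
    have ht'10 : t' 1 0 = r := by simp [ht']
    have ht'i : ∀ i j, invert (t' i j) = t' i j := by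
      intro i j
      fin_cases i <;> fin_cases j <;>
        simp [ht', map_neg, map_sub, map_mul, hi 1 0, hi 1 1, hi 0 1, hqi, hri]
    have ht'det : t'.det = 1 := by
      have e00 : t' 0 0 = -(t 1 0) := by simp [ht']
      have e01 : t' 0 1 = -(t 1 1) := by simp [ht']
      have e10 : t' 1 0 = r := by simp [ht']
      have e11 : t' 1 1 = t 0 1 - q * t 1 1 := by simp [ht']
      rw [Matrix.det_fin_two, e00, e01, e10, e11]
      linear_combination hdet' - t 1 1 * heq
    have hmem' : t' ∈ Submonoid.closure (Gens (p := p)) := by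
      rcases hsm with h0 | hlt
      · exact zero_case t' ht'i ht'det (by rw [ht'10, h0])
      · exact IH (Dg r) (lt_of_lt_of_le hlt hdg) t' ht'i ht'det le_rfl
    have key : t = Fou 1 * (G (-q) * (Fou (-1) * (Fou (-1) * t'))) := by
      rw [Matrix.eta_fin_two t, ht', ← Matrix.ext_iff]
      intro i j
      fin_cases i <;> fin_cases j <;>
        simp only [Fou, G, Matrix.mul_fin_two, inv_neg_one, inv_one, neg_neg, map_one, map_neg,
          Matrix.cons_val', Matrix.cons_val_zero, Matrix.cons_val_one, Matrix.head_cons,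
          Matrix.empty_val', Matrix.cons_val_fin_one, Matrix.head_fin_const, Matrix.of_apply, Matrix.of_apply,
          Fin.zero_eta, Fin.mk_one] <;>
        first
          | linear_combination heq
          | linear_combination
    rw [key]
    exact mul_mem (Fou_mem one_ne_zero) (mul_mem (G_mem (by rw [map_neg, hqi]))
      (mul_mem (Fou_mem neg_one_ne) (mul_mem (Fou_mem neg_one_ne) hmem')))

end SCA

/-- Every centered symplectic cellular automaton (a 2×2 matrix over
`R = F_p[u,u⁻¹]` preserving `σ̂` with determinant `1`) is a finite product of
shear matrices `G(f)` with `f` reflection invariant and local Fourier matrices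
`F(c)` with `c ≠ 0`. -/
theorem centered_sca_generated (p : ℕ) [Fact p.Prime]
    (t : Matrix (Fin 2) (Fin 2) (LaurentPolynomial (ZMod p)))
    (hpres : ∀ ξ η : LaurentPolynomial (ZMod p) × LaurentPolynomial (ZMod p),
        sig (app t ξ) (app t η) = sig ξ η)
    (hdet : t.det = 1) :
    t ∈ Submonoid.closure
      ({m | ∃ f : LaurentPolynomial (ZMod p), invert f = f ∧ m = G f} ∪
       {m | ∃ c : ZMod p, c ≠ 0 ∧ m = Fou c}) := by
  have E1 := hpres (1, 0) (1, 0)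
  have E2 := hpres (1, 0) (0, 1)
  have E3 := hpres (0, 1) (1, 0)
  have E4 := hpres (0, 1) (0, 1)
  simp only [sig, app, mul_one, mul_zero, add_zero, zero_add, map_one, map_zero, one_mul,
    zero_mul, sub_zero, zero_sub] at E1 E2 E3 E4
  have hdet' : t 0 0 * t 1 1 - t 0 1 * t 1 0 = 1 := by rw [← Matrix.det_fin_two]; exact hdet
  have hi : ∀ i j, invert (t i j) = t i j := by
    simp only [Fin.forall_fin_two]
    refine ⟨⟨?_, ?_⟩, ?_, ?_⟩
    · linear_combination (-(invert (t 0 0))) * hdet' + t 0 0 * E2 - t 0 1 * E1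
    · linear_combination (-(invert (t 0 1))) * hdet' + t 0 0 * E4 - t 0 1 * E3
    · linear_combination (-(invert (t 1 0))) * hdet' + t 1 0 * E2 - t 1 1 * E1
    · linear_combination (-(invert (t 1 1))) * hdet' + t 1 0 * E4 - t 1 1 * E3
  exact SCA.main (SCA.Dg (t 1 0)) t hi hdet le_rfl
end
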